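/- arXiv:1801.07780 — 3 statements merged into one kernel-verified Lean document; each statement's English description precedes it below -/
import Mathlib

section
/- If each function f_t : ℝ^n → ℝ (t = 1,…,T) is α-strongly convex and l-smooth, then the total cost function C(x₁,…,x_T) = Σ_{t=1}^T ( f_t(x_t) + (β/2)‖x_t − x_{t−1}‖² ) (with x₀ fixed) is α-strongly convex and (l + 4β)-smooth as a function of (x₁,…,x_T) ∈ ℝ^{nT}. -/
open Finset InnerProductSpace

section Aux

variable (n T : ℕ)

local notation "E" => EuclideanSpace ℝ (Fin n)
local notation "V" => PiLp 2 (fun _ : Fin T => EuclideanSpace ℝ (Fin n))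

/-- shift linear map -/
noncomputable def shiftL : V →ₗ[ℝ] V where
  toFun x := (WithLp.equiv 2 _).symm fun t : Fin T =>
    if h : (t : ℕ) = 0 then (0 : E)
    else x ⟨(t : ℕ) - 1, lt_of_le_of_lt (Nat.sub_le _ _) t.isLt⟩
  map_add' x y := by
    ext t : 1
    by_cases h : (t : ℕ) = 0 <;>
      simp [h, WithLp.equiv_symm_apply, PiLp.toLp_apply, PiLp.add_apply]
  map_smul' c x := by
    ext t : 1
    by_cases h : (t : ℕ) = 0 <;>
      simp [h, WithLp.equiv_symm_apply, PiLp.toLp_apply, PiLp.smul_apply]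

noncomputable def ACLM : V →L[ℝ] V :=
  haveI : ContinuousSMul ℝ V := inferInstance
  LinearMap.toContinuousLinearMap (LinearMap.id - shiftL n T)

noncomputable def bvec (x₀ : E) : V :=
  (WithLp.equiv 2 _).symm fun t : Fin T => if (t : ℕ) = 0 then x₀ else (0 : E)

lemma ACLM_apply (x : V) (t : Fin T) :
    (ACLM n T x) t = x t - (shiftL n T x) t := by
  have h : (ACLM n T) x = ((LinearMap.id : (PiLp 2 fun _ : Fin T => E) →ₗ[ℝ] (PiLp 2 fun _ : Fin T => E)) - shiftL n T) x :=
    by haveI : ContinuousSMul ℝ V := inferInstance; exact congrFun (LinearMap.coe_toContinuousLinearMap' _) x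
  rw [h, LinearMap.sub_apply, LinearMap.id_apply, PiLp.sub_apply]

lemma Amb_apply (x₀ : E) (x : V) (t : Fin T) :
    (ACLM n T x - bvec n T x₀) t = x t - (if h : (t : ℕ) = 0 then x₀
      else x ⟨(t : ℕ) - 1, lt_of_le_of_lt (Nat.sub_le _ _) t.isLt⟩) := by
  rw [PiLp.sub_apply, ACLM_apply]
  by_cases h : (t : ℕ) = 0 <;>
    simp [bvec, shiftL, h, WithLp.equiv_symm_apply, PiLp.toLp_apply] <;> abel

lemma shift_sum_le (d : V) :
    ∑ t : Fin T, ‖(shiftL n T d) t‖ ^ 2 ≤ ∑ t : Fin T, ‖d t‖ ^ 2 := by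
  classical
  set predF : Fin T → Fin T := fun t =>
    ⟨(t : ℕ) - 1, lt_of_le_of_lt (Nat.sub_le _ _) t.isLt⟩ with hpredF
  have hval : ∀ t : Fin T, ‖(shiftL n T d) t‖ ^ 2 =
      if ¬ (t : ℕ) = 0 then ‖d (predF t)‖ ^ 2 else 0 := by
    intro t
    by_cases h : (t : ℕ) = 0 <;> simp [shiftL, h, WithLp.equiv_symm_apply, PiLp.toLp_apply, predF]
  calc ∑ t : Fin T, ‖(shiftL n T d) t‖ ^ 2
      = ∑ t ∈ univ.filter (fun t : Fin T => ¬ (t : ℕ) = 0), ‖d (predF t)‖ ^ 2 := by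
        rw [Finset.sum_congr rfl (fun t _ => hval t), Finset.sum_ite, Finset.sum_const_zero,
          add_zero]
    _ = ∑ u ∈ (univ.filter (fun t : Fin T => ¬ (t : ℕ) = 0)).image predF, ‖d u‖ ^ 2 := by
        rw [Finset.sum_image]
        intro a ha b hb hab
        simp only [Finset.coe_filter, Set.mem_setOf_eq, Finset.mem_univ, true_and] at ha hb
        have : (a : ℕ) - 1 = (b : ℕ) - 1 := congrArg Fin.val hab
        exact Fin.ext (by omega)
    _ ≤ ∑ u : Fin T, ‖d u‖ ^ 2 := by
        refine Finset.sum_le_sum_of_subset_of_nonneg (Finset.subset_univ _) ?_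
        intro i _ _; positivity

lemma normA_sq_le (d : V) : ‖ACLM n T d‖ ^ 2 ≤ 4 * ‖d‖ ^ 2 := by
  have h1 : ‖ACLM n T d‖ ^ 2 = ∑ t : Fin T, ‖(ACLM n T d) t‖ ^ 2 :=
    PiLp.norm_sq_eq_of_L2 _ _
  have h2 : ‖d‖ ^ 2 = ∑ t : Fin T, ‖d t‖ ^ 2 := PiLp.norm_sq_eq_of_L2 _ _
  have hterm : ∀ t : Fin T, ‖(ACLM n T d) t‖ ^ 2 ≤
      2 * ‖d t‖ ^ 2 + 2 * ‖(shiftL n T d) t‖ ^ 2 := by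
    intro t
    rw [ACLM_apply]
    have h := norm_sub_le (d t) ((shiftL n T d) t)
    nlinarith [norm_nonneg (d t), norm_nonneg ((shiftL n T d) t),
      norm_nonneg (d t - (shiftL n T d) t), sq_nonneg (‖d t‖ - ‖(shiftL n T d) t‖)]
  have hs := shift_sum_le n T d
  calc ‖ACLM n T d‖ ^ 2 = ∑ t : Fin T, ‖(ACLM n T d) t‖ ^ 2 := h1
    _ ≤ ∑ t : Fin T, (2 * ‖d t‖ ^ 2 + 2 * ‖(shiftL n T d) t‖ ^ 2) :=
        Finset.sum_le_sum fun t _ => hterm t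
    _ = 2 * ∑ t : Fin T, ‖d t‖ ^ 2 + 2 * ∑ t : Fin T, ‖(shiftL n T d) t‖ ^ 2 := by
        rw [Finset.sum_add_distrib, ← Finset.mul_sum, ← Finset.mul_sum]
    _ ≤ 4 * ‖d‖ ^ 2 := by rw [h2]; linarith

end Aux

/-- If each `f t` is `α`-strongly convex and `l`-smooth (stated via its
gradient `gf t`), then the total cost
`C x = ∑ t, (f t (x t) + (β/2) * ‖x t - x_{t-1}‖²)` (with `x₀` fixed) is
`α`-strongly convex and `(l + 4β)`-smooth on `(ℝⁿ)ᵀ`. -/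
theorem total_cost_strongly_convex_and_smooth
    (n T : ℕ) (α l β : ℝ) (hβ : 0 ≤ β)
    (f : Fin T → EuclideanSpace ℝ (Fin n) → ℝ)
    (gf : Fin T → EuclideanSpace ℝ (Fin n) → EuclideanSpace ℝ (Fin n))
    (hgf : ∀ t x, HasGradientAt (f t) (gf t x) x)
    (hsc : ∀ t (x y : EuclideanSpace ℝ (Fin n)),
      f t y ≥ f t x + ⟪gf t x, y - x⟫_ℝ + α / 2 * ‖y - x‖ ^ 2)
    (hsm : ∀ t (x y : EuclideanSpace ℝ (Fin n)),
      f t y ≤ f t x + ⟪gf t x, y - x⟫_ℝ + l / 2 * ‖y - x‖ ^ 2)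
    (x₀ : EuclideanSpace ℝ (Fin n))
    (C : PiLp 2 (fun _ : Fin T => EuclideanSpace ℝ (Fin n)) → ℝ)
    (hC : ∀ x, C x = ∑ t : Fin T,
      (f t (x t) + β / 2 *
        ‖x t - (if h : (t : ℕ) = 0 then x₀
                else x ⟨(t : ℕ) - 1, lt_of_le_of_lt (Nat.sub_le _ _) t.isLt⟩)‖ ^ 2)) :
    ∃ gC : PiLp 2 (fun _ : Fin T => EuclideanSpace ℝ (Fin n)) →
           PiLp 2 (fun _ : Fin T => EuclideanSpace ℝ (Fin n)),
      (∀ x, HasGradientAt C (gC x) x) ∧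
      (∀ x y, C y ≥ C x + ⟪gC x, y - x⟫_ℝ + α / 2 * ‖y - x‖ ^ 2) ∧
      (∀ x y, C y ≤ C x + ⟪gC x, y - x⟫_ℝ + (l + 4 * β) / 2 * ‖y - x‖ ^ 2) := by
  classical
  set A := ACLM n T with hA
  set b := bvec n T x₀ with hb
  have hC' : ∀ x, C x = (∑ t : Fin T, f t (x t)) + β / 2 * ‖A x - b‖ ^ 2 := by
    intro x
    rw [hC x, Finset.sum_add_distrib, PiLp.norm_sq_eq_of_L2, Finset.mul_sum]
    congr 1
    refine Finset.sum_congr rfl fun t _ => ?_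
    rw [Amb_apply]
  set gC : PiLp 2 (fun _ : Fin T => EuclideanSpace ℝ (Fin n)) →
      PiLp 2 (fun _ : Fin T => EuclideanSpace ℝ (Fin n)) := fun x =>
    (WithLp.equiv 2 _).symm (fun t : Fin T => gf t (x t)) +
      β • (ContinuousLinearMap.adjoint A) (A x - b) with hgC
  have hinner : ∀ x d, ⟪gC x, d⟫_ℝ =
      (∑ t : Fin T, ⟪gf t (x t), d t⟫_ℝ) + β * ⟪A x - b, A d⟫_ℝ := by
    intro x d
    simp only [hgC]
    rw [inner_add_left, real_inner_smul_left, ContinuousLinearMap.adjoint_inner_left]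
    congr 1
  refine ⟨gC, ?_, ?_, ?_⟩
  · -- gradient
    intro x
    rw [hasGradientAt_iff_hasFDerivAt]
    have hAfd : HasFDerivAt (fun z => A z - b) (A : _ →L[ℝ] _) x :=
      A.hasFDerivAt.sub_const b
    have hq : HasFDerivAt (fun z => ⟪A z - b, A z - b⟫_ℝ)
        ((fderivInnerCLM ℝ (A x - b, A x - b)).comp (A.prod A)) x := hAfd.inner ℝ hAfd
    have hq2 : HasFDerivAt (fun z => β / 2 * ⟪A z - b, A z - b⟫_ℝ)
        ((β / 2) • ((fderivInnerCLM ℝ (A x - b, A x - b)).comp (A.prod A))) x :=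
      hq.const_mul _
    have hft : ∀ t : Fin T, HasFDerivAt
        (fun z : PiLp 2 (fun _ : Fin T => EuclideanSpace ℝ (Fin n)) => f t (z t))
        ((toDual ℝ (EuclideanSpace ℝ (Fin n)) (gf t (x t)) :
            EuclideanSpace ℝ (Fin n) →L[ℝ] ℝ).comp (PiLp.proj 2 _ t)) x :=
      fun t => ((hgf t (x t)).hasFDerivAt).comp x
        ((PiLp.proj (𝕜 := ℝ) 2 (fun _ : Fin T => EuclideanSpace ℝ (Fin n)) t).hasFDerivAt)
    have hF : HasFDerivAt
        (fun z : PiLp 2 (fun _ : Fin T => EuclideanSpace ℝ (Fin n)) =>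
          ∑ t : Fin T, f t (z t))
        (∑ t : Fin T, (toDual ℝ (EuclideanSpace ℝ (Fin n)) (gf t (x t)) :
            EuclideanSpace ℝ (Fin n) →L[ℝ] ℝ).comp (PiLp.proj 2 _ t)) x :=
      HasFDerivAt.fun_sum fun t _ => hft t
    have htot := hF.add hq2
    have hCeq : C = fun z => (∑ t : Fin T, f t (z t)) + β / 2 * ⟪A z - b, A z - b⟫_ℝ := by
      funext z
      rw [hC' z, real_inner_self_eq_norm_sq]
    have hclm : (toDual ℝ _) (gC x) =
        (∑ t : Fin T, (toDual ℝ (EuclideanSpace ℝ (Fin n)) (gf t (x t)) :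
            EuclideanSpace ℝ (Fin n) →L[ℝ] ℝ).comp (PiLp.proj 2 _ t)) +
        (β / 2) • ((fderivInnerCLM ℝ (A x - b, A x - b)).comp (A.prod A)) := by
      apply ContinuousLinearMap.ext
      intro d
      rw [toDual_apply_apply, hinner x d]
      simp only [ContinuousLinearMap.add_apply, ContinuousLinearMap.coe_sum',
        Finset.sum_apply, ContinuousLinearMap.coe_comp', Function.comp_apply,
        PiLp.proj_apply, toDual_apply_apply, ContinuousLinearMap.coe_smul', Pi.smul_apply,
        fderivInnerCLM_apply, ContinuousLinearMap.prod_apply, smul_eq_mul]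
      rw [real_inner_comm (A d) (A x - b)]
      ring
    rw [hCeq, hclm]
    exact htot
  · -- strong convexity
    intro x y
    have key : C y = C x + ⟪gC x, y - x⟫_ℝ +
        (∑ t : Fin T, (f t (y t) - f t (x t) - ⟪gf t (x t), y t - x t⟫_ℝ)) +
        β / 2 * ‖A (y - x)‖ ^ 2 := by
      have hAdd : A y - b = (A x - b) + A (y - x) := by rw [map_sub]; abel
      have hexp : ‖A y - b‖ ^ 2 = ‖A x - b‖ ^ 2 + 2 * ⟪A x - b, A (y - x)⟫_ℝ +
          ‖A (y - x)‖ ^ 2 := by rw [hAdd, norm_add_sq_real]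
      have hsum : ∑ t : Fin T, (f t (y t) - f t (x t) - ⟪gf t (x t), y t - x t⟫_ℝ)
          = (∑ t : Fin T, f t (y t)) - (∑ t : Fin T, f t (x t)) -
            ∑ t : Fin T, ⟪gf t (x t), y t - x t⟫_ℝ := by
        rw [Finset.sum_sub_distrib, Finset.sum_sub_distrib]
      have hi := hinner x (y - x)
      simp only [PiLp.sub_apply] at hi
      rw [hC' y, hC' x, hi, hsum]
      linear_combination (β / 2) * hexp
    have hnorm : ‖y - x‖ ^ 2 = ∑ t : Fin T, ‖y t - x t‖ ^ 2 := by
      rw [PiLp.norm_sq_eq_of_L2]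
      exact Finset.sum_congr rfl fun t _ => by rw [PiLp.sub_apply]
    have hS : (∑ t : Fin T, (f t (y t) - f t (x t) - ⟪gf t (x t), y t - x t⟫_ℝ)) ≥
        α / 2 * ‖y - x‖ ^ 2 := by
      rw [hnorm, Finset.mul_sum]
      exact Finset.sum_le_sum fun t _ => by have := hsc t (x t) (y t); linarith
    have hv : 0 ≤ β / 2 * ‖A (y - x)‖ ^ 2 := by positivity
    rw [key]; linarith
  · -- smoothness
    intro x y
    have key : C y = C x + ⟪gC x, y - x⟫_ℝ +
        (∑ t : Fin T, (f t (y t) - f t (x t) - ⟪gf t (x t), y t - x t⟫_ℝ)) +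
        β / 2 * ‖A (y - x)‖ ^ 2 := by
      have hAdd : A y - b = (A x - b) + A (y - x) := by rw [map_sub]; abel
      have hexp : ‖A y - b‖ ^ 2 = ‖A x - b‖ ^ 2 + 2 * ⟪A x - b, A (y - x)⟫_ℝ +
          ‖A (y - x)‖ ^ 2 := by rw [hAdd, norm_add_sq_real]
      have hsum : ∑ t : Fin T, (f t (y t) - f t (x t) - ⟪gf t (x t), y t - x t⟫_ℝ)
          = (∑ t : Fin T, f t (y t)) - (∑ t : Fin T, f t (x t)) -
            ∑ t : Fin T, ⟪gf t (x t), y t - x t⟫_ℝ := by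
        rw [Finset.sum_sub_distrib, Finset.sum_sub_distrib]
      have hi := hinner x (y - x)
      simp only [PiLp.sub_apply] at hi
      rw [hC' y, hC' x, hi, hsum]
      linear_combination (β / 2) * hexp
    have hnorm : ‖y - x‖ ^ 2 = ∑ t : Fin T, ‖y t - x t‖ ^ 2 := by
      rw [PiLp.norm_sq_eq_of_L2]
      exact Finset.sum_congr rfl fun t _ => by rw [PiLp.sub_apply]
    have hS : (∑ t : Fin T, (f t (y t) - f t (x t) - ⟪gf t (x t), y t - x t⟫_ℝ)) ≤
        l / 2 * ‖y - x‖ ^ 2 := by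
      rw [hnorm, Finset.mul_sum]
      exact Finset.sum_le_sum fun t _ => by have := hsm t (x t) (y t); linarith
    have hv : β / 2 * ‖A (y - x)‖ ^ 2 ≤ 2 * β * ‖y - x‖ ^ 2 := by
      have := normA_sq_le n T (y - x)
      nlinarith
    rw [key]; linarith
end

section
/- Let (x_t)_{t=1}^T and (θ_t)_{t=1}^T be sequences in ℝ^n with x₁ = θ₀ (a given point) and suppose ‖x_{t+1} − θ_t‖ ≤ κ‖x_t − θ_t‖ for all 1 ≤ t ≤ T−1, where 0 ≤ κ < 1. Then Σ_{t=1}^T ‖x_t − θ_t‖ ≤ (1/(1−κ)) Σ_{t=1}^T ‖θ_t − θ_{t−1}‖. -/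
open Finset

/-- Recursive tracking inequality: if `x₁ = θ₀` and
`‖x_{t+1} − θ_t‖ ≤ κ‖x_t − θ_t‖` for `1 ≤ t ≤ T−1` with `0 ≤ κ < 1`, then
`∑_{t=1}^T ‖x_t − θ_t‖ ≤ (1/(1−κ)) ∑_{t=1}^T ‖θ_t − θ_{t−1}‖`. -/
theorem tracking_error_path_length
    (n T : ℕ) (κ : ℝ) (hκ0 : 0 ≤ κ) (hκ1 : κ < 1)
    (x θ : ℕ → EuclideanSpace ℝ (Fin n))
    (hinit : x 1 = θ 0)
    (hrec : ∀ t, 1 ≤ t → t ≤ T - 1 → ‖x (t + 1) - θ t‖ ≤ κ * ‖x t - θ t‖) :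
    ∑ t ∈ Finset.Icc 1 T, ‖x t - θ t‖ ≤
      (1 / (1 - κ)) * ∑ t ∈ Finset.Icc 1 T, ‖θ t - θ (t - 1)‖ := by
  set a : ℕ → ℝ := fun t => ‖x t - θ t‖ with ha
  set p : ℕ → ℝ := fun t => ‖θ t - θ (t - 1)‖ with hp
  have key : ∀ m, m ≤ T →
      ∑ t ∈ Finset.Icc 1 m, a t ≤
        (∑ t ∈ Finset.Icc 1 m, p t) + κ * ∑ t ∈ Finset.Icc 1 (m - 1), a t := by
    intro m
    induction m with
    | zero => intro _; simp
    | succ k ih =>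
      intro hkT
      rcases Nat.eq_zero_or_pos k with hk0 | hk1
      · subst hk0
        simp only [Nat.add_sub_cancel]
        have : a 1 = p 1 := by
          simp only [ha, hp, hinit]
          exact norm_sub_rev _ _
        simp [this]
      · have hstep : a (k + 1) ≤ κ * a k + p (k + 1) := by
          have h1 : a (k + 1) ≤ ‖x (k + 1) - θ k‖ + ‖θ k - θ (k + 1)‖ := by
            simpa [ha] using norm_sub_le_norm_sub_add_norm_sub (x (k+1)) (θ k) (θ (k+1))
          have h2 : ‖x (k + 1) - θ k‖ ≤ κ * a k := hrec k hk1 (by omega)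
          have h3 : ‖θ k - θ (k + 1)‖ = p (k + 1) := by
            simp only [hp, Nat.add_sub_cancel]
            exact norm_sub_rev _ _
          linarith
        have e1 : ∑ t ∈ Finset.Icc 1 (k + 1), a t
            = (∑ t ∈ Finset.Icc 1 k, a t) + a (k + 1) :=
          Finset.sum_Icc_succ_top (by omega) a
        have e2 : ∑ t ∈ Finset.Icc 1 (k + 1), p t
            = (∑ t ∈ Finset.Icc 1 k, p t) + p (k + 1) :=
          Finset.sum_Icc_succ_top (by omega) p
        have e3 : ∑ t ∈ Finset.Icc 1 k, a t
            = (∑ t ∈ Finset.Icc 1 (k - 1), a t) + a k := by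
          have : k - 1 + 1 = k := by omega
          rw [← this, Finset.sum_Icc_succ_top (by omega) a, this]
        have ihk := ih (by omega)
        rw [e1, e2]
        simp only [Nat.add_sub_cancel]
        rw [e3]
        nlinarith [ihk]
  have hS := key T le_rfl
  have hsub : ∑ t ∈ Finset.Icc 1 (T - 1), a t ≤ ∑ t ∈ Finset.Icc 1 T, a t :=
    Finset.sum_le_sum_of_subset_of_nonneg
      (Finset.Icc_subset_Icc_right (by omega))
      (fun i _ _ => norm_nonneg _)
  have h1κ : 0 < 1 - κ := by linarith
  rw [div_mul_eq_mul_div, one_mul, le_div_iff₀ h1κ]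
  nlinarith [hS, hsub]
end

section
/- Let T ≥ 2W ≥ 2 be integers, D > 0, and 2D ≤ L ≤ DT. Define Δ = ⌈T/⌊L/D⌋⌉ and let J = {t ∈ ℤ : 1 ≤ t ≤ T − W and t + W ≡ 1 (mod Δ)}. Then |J| ≥ L/(12D). -/
open Finset

/-- For integers `T ≥ 2W ≥ 2`, `D > 0`, `2D ≤ L ≤ DT`, `Δ = ⌈T/⌊L/D⌋⌉` and
`J = {1 ≤ t ≤ T − W : t + W ≡ 1 (mod Δ)}`, we have `|J| ≥ L/(12D)`. -/
theorem card_J_ge_with_prediction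
    (T W : ℕ) (hW : 1 ≤ W) (hTW : 2 * W ≤ T)
    (D L : ℝ) (hD : 0 < D) (hL : 2 * D ≤ L) (hLT : L ≤ D * T)
    (Δ : ℤ) (hΔ : Δ = ⌈(T : ℝ) / (⌊L / D⌋ : ℝ)⌉)
    (J : Finset ℤ)
    (hJ : J = (Finset.Icc (1 : ℤ) ((T : ℤ) - (W : ℤ))).filter
      (fun t => (t + (W : ℤ)) ≡ 1 [ZMOD Δ])) :
    (J.card : ℝ) ≥ L / (12 * D) := by
  set m : ℤ := ⌊L / D⌋ with hm
  have hLD2 : (2 : ℝ) ≤ L / D := (le_div_iff₀ hD).mpr (by linarith)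
  have hm2 : (2 : ℤ) ≤ m := by exact_mod_cast Int.le_floor.mpr (by exact_mod_cast hLD2)
  have hLDT : L / D ≤ T := (div_le_iff₀ hD).mpr (by linarith [hLT])
  have hmT : m ≤ (T : ℤ) := by
    have := Int.floor_le_floor hLDT
    simpa using this
  have hmR : (m : ℝ) ≤ L / D := Int.floor_le _
  have hmR1 : L / D ≤ (m : ℝ) + 1 := le_of_lt (Int.lt_floor_add_one _)
  have hT2 : (2 : ℤ) ≤ (T : ℤ) := le_trans hm2 hmT
  have hTpos : (0 : ℝ) < T := by
    have : (0 : ℤ) < T := by omega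
    exact_mod_cast this
  have hmpos : (0 : ℝ) < (m : ℝ) := by
    have : (0 : ℤ) < m := by omega
    exact_mod_cast this
  have hΔpos : (0 : ℤ) < Δ := by
    rw [hΔ]
    exact Int.lt_ceil.mpr (show ((0:ℤ):ℝ) < (T:ℝ) / (m:ℝ) by push_cast; positivity)
  have hΔ1 : (1 : ℤ) ≤ Δ := hΔpos
  set N : ℤ := (T : ℤ) - (W : ℤ) with hN
  have hWT : (2 : ℤ) * W ≤ T := by exact_mod_cast hTW
  have hΔN : Δ ≤ N := by
    rw [hΔ]
    apply Int.ceil_le.mpr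
    have h1 : (T : ℝ) / m ≤ (T : ℝ) / 2 :=
      div_le_div_of_nonneg_left hTpos.le (by norm_num) (by exact_mod_cast hm2)
    have h2 : (T : ℝ) / 2 ≤ (N : ℝ) := by
      push_cast [hN]
      have : (2 : ℝ) * W ≤ T := by exact_mod_cast hTW
      linarith
    linarith
  have hΔub : (Δ : ℝ) ≤ 2 * T / m := by
    have h1 : (Δ : ℝ) < (T : ℝ) / m + 1 := by
      rw [hΔ]; exact_mod_cast Int.ceil_lt_add_one _
    have h2 : (1 : ℝ) ≤ (T : ℝ) / m :=
      (le_div_iff₀ hmpos).mpr (by simpa using (by exact_mod_cast hmT : (m:ℝ) ≤ T))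
    have h3 : 2 * (T : ℝ) / m = T / m + T / m := by ring
    linarith
  -- residue and first element
  set r : ℤ := (1 - (W : ℤ)) % Δ with hr
  have hr0 : 0 ≤ r := Int.emod_nonneg _ (by omega)
  have hrΔ : r < Δ := Int.emod_lt_of_pos _ hΔpos
  set t0 : ℤ := if r = 0 then Δ else r with ht0def
  have ht01 : 1 ≤ t0 := by rw [ht0def]; split <;> omega
  have ht0Δ : t0 ≤ Δ := by rw [ht0def]; split <;> omega
  have ht0cong : t0 % Δ = (1 - (W : ℤ)) % Δ := by
    rw [ht0def]; split
    · rw [Int.emod_self]; omega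
    · rw [hr, Int.emod_emod_of_dvd _ dvd_rfl]
  set q : ℤ := (N - t0) / Δ with hq
  have hNt0 : 0 ≤ N - t0 := by omega
  have hq0 : 0 ≤ q := Int.ediv_nonneg hNt0 hΔpos.le
  set k : ℕ := q.toNat + 1 with hk
  -- the explicit subset
  have hsub : (Finset.range k).image (fun i : ℕ => t0 + (i : ℤ) * Δ) ⊆ J := by
    intro x hx
    simp only [Finset.mem_image, Finset.mem_range] at hx
    obtain ⟨i, hi, rfl⟩ := hx
    rw [hJ, Finset.mem_filter, Finset.mem_Icc]
    have hiq : (i : ℤ) ≤ q := by omega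
    have hle : (i : ℤ) * Δ ≤ q * Δ := mul_le_mul_of_nonneg_right hiq hΔpos.le
    have hqΔ : q * Δ ≤ N - t0 := Int.ediv_mul_le _ (by omega)
    have hiΔ0 : 0 ≤ (i : ℤ) * Δ := by positivity
    refine ⟨⟨by omega, by omega⟩, ?_⟩
    show (t0 + (i : ℤ) * Δ + W) % Δ = 1 % Δ
    have heq : t0 + (i : ℤ) * Δ + W = (t0 + W) + Δ * i := by ring
    rw [heq, Int.add_mul_emod_self_left]
    have h := Int.ModEq.add_right (W : ℤ) (ht0cong : t0 ≡ 1 - (W : ℤ) [ZMOD Δ])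
    exact (by simpa using h : t0 + (W : ℤ) ≡ 1 [ZMOD Δ])
  -- cardinality lower bound
  have hcard : k ≤ J.card := by
    have hinj : Set.InjOn (fun i : ℕ => t0 + (i : ℤ) * Δ) (Finset.range k) := by
      intro a _ b _ hab
      simp only at hab
      have : (a : ℤ) * Δ = (b : ℤ) * Δ := by omega
      have := mul_right_cancel₀ (by omega : Δ ≠ 0) this
      exact_mod_cast this
    calc k = ((Finset.range k).image (fun i : ℕ => t0 + (i : ℤ) * Δ)).card := by
            rw [Finset.card_image_of_injOn hinj, Finset.card_range]
      _ ≤ J.card := Finset.card_le_card hsub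
  -- real bounds
  have hk1 : (1 : ℝ) ≤ (J.card : ℝ) := by exact_mod_cast Nat.one_le_iff_ne_zero.mpr (by omega)
  have hΔRpos : (0 : ℝ) < (Δ : ℝ) := by exact_mod_cast hΔpos
  have hkq : ((k : ℤ) : ℝ) > ((N : ℝ) - t0) / Δ := by
    have h1 : (N - t0) < (q + 1) * Δ := Int.lt_ediv_add_one_mul_self _ hΔpos
    have h2 : ((N : ℝ) - t0) < (q + 1) * Δ := by exact_mod_cast h1
    have h3 : ((k : ℤ) : ℝ) = (q : ℝ) + 1 := by
      exact_mod_cast (by omega : (k : ℤ) = q + 1)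
    rw [h3, gt_iff_lt, div_lt_iff₀ hΔRpos]
    exact h2
  have hJk : ((k : ℤ) : ℝ) ≤ (J.card : ℝ) := by exact_mod_cast hcard
  -- N/Δ ≥ m/4
  have hNΔ : (m : ℝ) / 4 ≤ (N : ℝ) / Δ := by
    have hNhalf : (T : ℝ) / 2 ≤ (N : ℝ) := by
      push_cast [hN]
      have : (2 : ℝ) * W ≤ T := by exact_mod_cast hTW
      linarith
    have h2 : (0 : ℝ) < 2 * T / m := by positivity
    have := div_le_div_of_nonneg_left (c := (Δ : ℝ)) hTpos.le hΔRpos hΔub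
    have key : (m : ℝ) / 4 * Δ ≤ N := by
      have h4 : (m : ℝ) / 4 * Δ ≤ (m : ℝ) / 4 * (2 * T / m) := by
        apply mul_le_mul_of_nonneg_left hΔub (by positivity)
      have h5 : (m : ℝ) / 4 * (2 * T / m) = T / 2 := by
        field_simp; ring
      linarith
    exact (le_div_iff₀ hΔRpos).mpr key
  have hfinal : L / (12 * D) ≤ ((m : ℝ) + 1) / 12 := by
    have : L / (12 * D) = (L / D) / 12 := by rw [div_div, mul_comm]
    rw [this]
    linarith
  by_cases hm6 : m ≤ 6
  · have : ((m : ℝ) + 1) / 12 ≤ 1 := by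
      have : (m : ℝ) ≤ 6 := by exact_mod_cast hm6
      linarith
    linarith
  · push_neg at hm6
    have hm7 : (7 : ℝ) ≤ (m : ℝ) := by exact_mod_cast hm6
    have ht0R : (t0 : ℝ) ≤ (Δ : ℝ) := by exact_mod_cast ht0Δ
    have h2 : (N : ℝ) / Δ - 1 ≤ ((N : ℝ) - t0) / Δ := by
      rw [le_div_iff₀ hΔRpos]
      have hNd : (N : ℝ) / Δ * Δ = N := div_mul_cancel₀ _ (ne_of_gt hΔRpos)
      have hexp : ((N : ℝ) / Δ - 1) * Δ = (N : ℝ) - Δ := by rw [sub_mul, hNd, one_mul]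
      linarith
    have h1 : ((m : ℝ) + 1) / 12 ≤ (m : ℝ) / 4 - 1 := by linarith
    linarith
end
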